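/- If a connected unweighted graph G admits an (a,b,c)-contraction sequence for integers a, b, c ≥ 1, then G admits an (ac, bc, 1)-contraction sequence. -/

import Mathlib

open scoped BigOperators
noncomputable section
namespace Paper
variable {V : Type}

def IsPartition (Ps : Set (Set V)) : Prop :=
  (∀ v : V, ∃ P ∈ Ps, v ∈ P) ∧
  (∀ P ∈ Ps, ∀ Q ∈ Ps, P ≠ Q → Disjoint P Q) ∧
  (∀ P ∈ Ps, P.Nonempty)

def quotGraph (G : SimpleGraph V) (Ps : Set (Set V)) : SimpleGraph {D // D ∈ Ps} where
  Adj P Q := P ≠ Q ∧ ∃ u ∈ P.1, ∃ v ∈ Q.1, G.Adj u v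
  symm := by
    constructor
    rintro P Q ⟨hne, u, hu, x, hx, hadj⟩
    exact ⟨hne.symm, x, hx, u, hu, hadj.symm⟩
  loopless := by
    constructor
    rintro P ⟨hne, -⟩
    exact hne rfl

structure ContractionSeq [Fintype V] (G : SimpleGraph V) (a b c : ℕ) where
  Ps : ℕ → Set (Set V)
  con : ℕ → Set (Set V)
  ispart : ∀ i ≤ b, IsPartition (Ps i)
  bot : Ps 0 = {P | ∃ v : V, P = {v}}
  top : Ps b = {Set.univ}
  refines : ∀ i < b, ∀ P ∈ Ps i, ∃ Q ∈ Ps (i + 1), P ⊆ Q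
  con_sub : ∀ i < b, con (i + 1) ⊆ Ps (i + 1)
  old_parts : ∀ i < b, ∀ P ∈ Ps (i + 1), P ∉ con (i + 1) → P ∈ Ps i
  contracted : ∀ i < b, ∀ P ∈ con (i + 1),
    ∃ D₀ : Set V, ∃ h₀ : D₀ ∈ ({D | D ∈ Ps i ∧ D ⊆ P} : Set (Set V)),
      ∀ D : Set V, ∀ hD : D ∈ ({D | D ∈ Ps i ∧ D ⊆ P} : Set (Set V)),
        ∃ wlk : (quotGraph G {D | D ∈ Ps i ∧ D ⊆ P}).Walk ⟨D₀, h₀⟩ ⟨D, hD⟩,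
          wlk.length ≤ c
  count : ∑ i ∈ Finset.range b, (con (i + 1)).ncard ≤ a

/-! ### Auxiliary material for Statement 11 -/

def Good (G : SimpleGraph V) (c : ℕ) (S : Set (Set V)) (f : Set V → ℕ) : Prop :=
  ∃ D₀ ∈ S, f D₀ = 0 ∧ (∀ D ∈ S, f D = 0 → D = D₀) ∧ (∀ D ∈ S, f D ≤ c) ∧
    (∀ D ∈ S, 0 < f D → ∃ D' ∈ S, f D' < f D ∧ ∃ u ∈ D, ∃ v ∈ D', G.Adj u v)

lemma exists_good {G : SimpleGraph V} {c : ℕ} (S : Set (Set V))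
    (h : ∃ D₀ : Set V, ∃ h₀ : D₀ ∈ S,
      ∀ D : Set V, ∀ hD : D ∈ S,
        ∃ wlk : (quotGraph G S).Walk ⟨D₀, h₀⟩ ⟨D, hD⟩, wlk.length ≤ c) :
    ∃ f, Good G c S f := by
  classical
  obtain ⟨D₀, h₀, hw⟩ := h
  refine ⟨fun D => if hD : D ∈ S then (quotGraph G S).dist ⟨D₀, h₀⟩ ⟨D, hD⟩ else 0,
    D₀, h₀, by simp [SimpleGraph.dist_self], ?_, ?_, ?_⟩
  · intro D hD h0
    simp only [dif_pos hD] at h0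
    obtain ⟨w, -⟩ := hw D hD
    have := (SimpleGraph.Reachable.dist_eq_zero_iff ⟨w⟩).mp h0
    exact (congrArg Subtype.val this.symm : _)
  · intro D hD
    simp only [dif_pos hD]
    obtain ⟨w, hwl⟩ := hw D hD
    exact le_trans (SimpleGraph.dist_le w) hwl
  · intro D hD hpos
    simp only [dif_pos hD] at hpos
    obtain ⟨w, -⟩ := hw D hD
    obtain ⟨p, hp⟩ := SimpleGraph.Reachable.exists_walk_length_eq_dist ⟨w⟩
    have hne : (⟨D, hD⟩ : {D // D ∈ S}) ≠ ⟨D₀, h₀⟩ := by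
      intro h
      rw [h, SimpleGraph.dist_self] at hpos
      omega
    obtain ⟨x, hadj, q, hq⟩ := SimpleGraph.Walk.exists_eq_cons_of_ne hne p.reverse
    obtain ⟨hnex, u, hu, v, hv, huv⟩ := hadj
    refine ⟨x.1, x.2, ?_, u, hu, v, hv, huv⟩
    simp only [dif_pos hD, dif_pos x.2]
    have hq' : q.length + 1 = p.length := by
      have := congrArg SimpleGraph.Walk.length hq
      rw [SimpleGraph.Walk.length_reverse] at this
      change p.length = q.length + 1 at this
      omega
    have hle : (quotGraph G S).dist ⟨D₀, h₀⟩ ⟨x.1, x.2⟩ ≤ q.length :=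
      le_trans (SimpleGraph.dist_le q.reverse) (by simp)
    rw [hp] at hq'
    omega

section Construction

variable [Fintype V] {G : SimpleGraph V} {a b c : ℕ}

open Classical in
def lvl (cs : ContractionSeq G a b c) (i : ℕ) (P : Set V) : Set V → ℕ :=
  if h : ∃ f, Good G c {D | D ∈ cs.Ps i ∧ D ⊆ P} f then h.choose else fun _ => 0

open Classical in
lemma lvl_good (cs : ContractionSeq G a b c) {i : ℕ} (hi : i < b) {P : Set V}
    (hP : P ∈ cs.con (i + 1)) : Good G c {D | D ∈ cs.Ps i ∧ D ⊆ P} (lvl cs i P) := by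
  have h : ∃ f, Good G c {D | D ∈ cs.Ps i ∧ D ⊆ P} f :=
    exists_good _ (cs.contracted i hi P hP)
  rw [lvl, dif_pos h]
  exact h.choose_spec

def ball (cs : ContractionSeq G a b c) (i : ℕ) (P : Set V) (k : ℕ) : Set V :=
  {v | ∃ D : Set V, (D ∈ cs.Ps i ∧ D ⊆ P) ∧ lvl cs i P D ≤ k ∧ v ∈ D}

def R (cs : ContractionSeq G a b c) (i k : ℕ) : Set (Set V) :=
  {X | (X ∈ cs.Ps i ∧ ∀ P ∈ cs.con (i + 1), ¬X ⊆ P)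
    ∨ (∃ P ∈ cs.con (i + 1), X = ball cs i P k)
    ∨ (X ∈ cs.Ps i ∧ ∃ P ∈ cs.con (i + 1), X ⊆ P ∧ k < lvl cs i P X)}

variable (cs : ContractionSeq G a b c)

lemma part_eq {i : ℕ} (hib : i ≤ b) {D D' : Set V} (hD : D ∈ cs.Ps i)
    (hD' : D' ∈ cs.Ps i) {v : V} (hv : v ∈ D) (hv' : v ∈ D') : D = D' := by
  by_contra hne
  exact (Set.disjoint_left.mp ((cs.ispart i hib).2.1 D hD D' hD' hne) hv) hv'

lemma part_nonempty {i : ℕ} (hib : i ≤ b) {D : Set V} (hD : D ∈ cs.Ps i) :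
    D.Nonempty := (cs.ispart i hib).2.2 D hD

lemma part_cover {i : ℕ} (hib : i ≤ b) (v : V) : ∃ D ∈ cs.Ps i, v ∈ D :=
  (cs.ispart i hib).1 v

lemma exists_sub_part {i : ℕ} (hi : i < b) {P : Set V} (hP : P ∈ cs.con (i + 1))
    {v : V} (hv : v ∈ P) : ∃ D : Set V, (D ∈ cs.Ps i ∧ D ⊆ P) ∧ v ∈ D := by
  obtain ⟨D, hD, hvD⟩ := part_cover cs hi.le v
  obtain ⟨Q, hQ, hDQ⟩ := cs.refines i hi D hD
  have hPQ : P = Q := part_eq cs hi (cs.con_sub i hi hP) hQ hv (hDQ hvD)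
  exact ⟨D, ⟨hD, hPQ ▸ hDQ⟩, hvD⟩

lemma not_sub_disjoint {i : ℕ} (hi : i < b) {P : Set V} (hP : P ∈ cs.con (i + 1))
    {D : Set V} (hD : D ∈ cs.Ps i) (hns : ¬D ⊆ P) {v : V} (hv : v ∈ D) : v ∉ P := by
  intro hvP
  obtain ⟨D', ⟨hD', hD'P⟩, hvD'⟩ := exists_sub_part cs hi hP hvP
  exact hns ((part_eq cs hi.le hD hD' hv hvD') ▸ hD'P)

lemma ball_subset {i k : ℕ} {P : Set V} : ball cs i P k ⊆ P := by
  rintro v ⟨D, ⟨-, hs⟩, -, hv⟩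
  exact hs hv

lemma ball_mono {i k k' : ℕ} {P : Set V} (h : k ≤ k') :
    ball cs i P k ⊆ ball cs i P k' := by
  rintro v ⟨D, hD, hl, hv⟩
  exact ⟨D, hD, hl.trans h, hv⟩

lemma ball_nonempty {i : ℕ} (hi : i < b) {P : Set V} (hP : P ∈ cs.con (i + 1))
    (k : ℕ) : (ball cs i P k).Nonempty := by
  obtain ⟨D₀, hD₀S, h0, -, -, -⟩ := lvl_good cs hi hP
  obtain ⟨v, hv⟩ := part_nonempty cs hi.le hD₀S.1
  exact ⟨v, D₀, hD₀S, by omega, hv⟩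

lemma ball_c {i : ℕ} (hi : i < b) {P : Set V} (hP : P ∈ cs.con (i + 1)) :
    ball cs i P c = P := by
  obtain ⟨D₀, hD₀S, -, -, hbound, -⟩ := lvl_good cs hi hP
  apply Set.Subset.antisymm (ball_subset cs)
  intro v hv
  obtain ⟨D, hDS, hvD⟩ := exists_sub_part cs hi hP hv
  exact ⟨D, hDS, hbound D hDS, hvD⟩

lemma sub_of_mem_ball {i : ℕ} (hi : i < b) {P : Set V} {k : ℕ} {D : Set V}
    (hD : D ∈ cs.Ps i) {v : V} (hv : v ∈ D) (hvb : v ∈ ball cs i P k) :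
    D ⊆ P ∧ lvl cs i P D ≤ k := by
  obtain ⟨D', ⟨hD', hD'P⟩, hl, hv'⟩ := hvb
  have := part_eq cs hi.le hD hD' hv hv'
  subst this
  exact ⟨hD'P, hl⟩

lemma eq_ball_zero {i : ℕ} (hi : i < b) {P : Set V} (hP : P ∈ cs.con (i + 1))
    {D : Set V} (hD : D ∈ cs.Ps i) (hDP : D ⊆ P) (h0 : lvl cs i P D = 0) :
    D = ball cs i P 0 := by
  obtain ⟨D₀, hD₀S, h00, huniq, -, -⟩ := lvl_good cs hi hP
  have hDD₀ : D = D₀ := huniq D ⟨hD, hDP⟩ h0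
  ext v
  constructor
  · intro hv
    exact ⟨D, ⟨hD, hDP⟩, by omega, hv⟩
  · rintro ⟨D', hD'S, hl, hv⟩
    have : D' = D₀ := huniq D' hD'S (Nat.le_zero.mp hl)
    rw [hDD₀, ← this]
    exact hv

lemma R_eq_of_inter {i k : ℕ} (hi : i < b) {X Y : Set V} (hX : X ∈ R cs i k)
    (hY : Y ∈ R cs i k) {v : V} (hvX : v ∈ X) (hvY : v ∈ Y) : X = Y := by
  have hball : ∀ P ∈ cs.con (i + 1), ∀ Z ∈ cs.Ps i, ∀ w ∈ Z,
      w ∈ ball cs i P k → Z ⊆ P ∧ lvl cs i P Z ≤ k := by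
    intro P hP Z hZ w hw hwb
    exact sub_of_mem_ball cs hi hZ hw hwb
  rcases hX with ⟨hXp, hXn⟩ | ⟨P, hP, rfl⟩ | ⟨hXp, P, hP, hXP, hXl⟩
  · rcases hY with ⟨hYp, -⟩ | ⟨Q, hQ, rfl⟩ | ⟨hYp, -, -, -, -⟩
    · exact part_eq cs hi.le hXp hYp hvX hvY
    · exact absurd (ball_subset cs hvY) (not_sub_disjoint cs hi hQ hXp (hXn Q hQ) hvX)
    · exact part_eq cs hi.le hXp hYp hvX hvY
  · rcases hY with ⟨hYp, hYn⟩ | ⟨Q, hQ, rfl⟩ | ⟨hYp, Q, hQ, hYQ, hYl⟩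
    · exact absurd (ball_subset cs hvX) (not_sub_disjoint cs hi hP hYp (hYn P hP) hvY)
    · have : P = Q :=
        part_eq cs hi (cs.con_sub i hi hP) (cs.con_sub i hi hQ)
          (ball_subset cs hvX) (ball_subset cs hvY)
      rw [this]
    · have h1 := hball P hP Y hYp v hvY hvX
      have : P = Q := part_eq cs hi (cs.con_sub i hi hP) (cs.con_sub i hi hQ)
        (h1.1 hvY) (hYQ hvY)
      rw [this] at h1
      omega
  · rcases hY with ⟨hYp, -⟩ | ⟨Q, hQ, rfl⟩ | ⟨hYp, -, -, -, -⟩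
    · exact part_eq cs hi.le hXp hYp hvX hvY
    · have h1 := hball Q hQ X hXp v hvX hvY
      have : Q = P := part_eq cs hi (cs.con_sub i hi hQ) (cs.con_sub i hi hP)
        (h1.1 hvX) (hXP hvX)
      rw [this] at h1
      omega
    · exact part_eq cs hi.le hXp hYp hvX hvY

lemma R_partition {i : ℕ} (hi : i < b) (k : ℕ) : IsPartition (R cs i k) := by
  classical
  refine ⟨?_, ?_, ?_⟩
  · intro v
    obtain ⟨D, hD, hvD⟩ := part_cover cs hi.le v
    by_cases h : ∃ P ∈ cs.con (i + 1), D ⊆ P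
    · obtain ⟨P, hP, hDP⟩ := h
      by_cases hl : lvl cs i P D ≤ k
      · exact ⟨ball cs i P k, Or.inr (Or.inl ⟨P, hP, rfl⟩), D, ⟨hD, hDP⟩, hl, hvD⟩
      · exact ⟨D, Or.inr (Or.inr ⟨hD, P, hP, hDP, by omega⟩), hvD⟩
    · push_neg at h
      exact ⟨D, Or.inl ⟨hD, h⟩, hvD⟩
  · intro X hX Y hY hne
    rw [Set.disjoint_left]
    intro v hvX hvY
    exact hne (R_eq_of_inter cs hi hX hY hvX hvY)
  · rintro X (⟨hXp, -⟩ | ⟨P, hP, rfl⟩ | ⟨hXp, -⟩)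
    · exact part_nonempty cs hi.le hXp
    · exact ball_nonempty cs hi hP k
    · exact part_nonempty cs hi.le hXp

lemma ball_mem_R {i : ℕ} {P : Set V} (hP : P ∈ cs.con (i + 1)) (k : ℕ) :
    ball cs i P k ∈ R cs i k := Or.inr (Or.inl ⟨P, hP, rfl⟩)

lemma R_zero {i : ℕ} (hi : i < b) : R cs i 0 = cs.Ps i := by
  classical
  ext X
  constructor
  · rintro (⟨hXp, -⟩ | ⟨P, hP, rfl⟩ | ⟨hXp, -⟩)
    · exact hXp
    · obtain ⟨D₀, hD₀S, h0, -, -, -⟩ := lvl_good cs hi hP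
      rw [← eq_ball_zero cs hi hP hD₀S.1 hD₀S.2 h0]
      exact hD₀S.1
    · exact hXp
  · intro hX
    by_cases h : ∃ P ∈ cs.con (i + 1), X ⊆ P
    · obtain ⟨P, hP, hXP⟩ := h
      by_cases h0 : lvl cs i P X = 0
      · exact Or.inr (Or.inl ⟨P, hP, eq_ball_zero cs hi hP hX hXP h0⟩)
      · exact Or.inr (Or.inr ⟨hX, P, hP, hXP, by omega⟩)
    · push_neg at h
      exact Or.inl ⟨hX, h⟩

lemma R_c {i : ℕ} (hi : i < b) : R cs i c = cs.Ps (i + 1) := by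
  classical
  ext X
  constructor
  · rintro (⟨hXp, hXn⟩ | ⟨P, hP, rfl⟩ | ⟨hXp, P, hP, hXP, hXl⟩)
    · obtain ⟨Q, hQ, hXQ⟩ := cs.refines i hi X hXp
      have hQn : Q ∉ cs.con (i + 1) := fun hQc => hXn Q hQc hXQ
      have hQp : Q ∈ cs.Ps i := cs.old_parts i hi Q hQ hQn
      obtain ⟨v, hv⟩ := part_nonempty cs hi.le hXp
      rw [part_eq cs hi.le hXp hQp hv (hXQ hv)]
      exact hQ
    · rw [ball_c cs hi hP]
      exact cs.con_sub i hi hP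
    · obtain ⟨-, -, -, -, hbound, -⟩ := lvl_good cs hi hP
      have := hbound X ⟨hXp, hXP⟩
      omega
  · intro hX
    by_cases h : X ∈ cs.con (i + 1)
    · exact Or.inr (Or.inl ⟨X, h, (ball_c cs hi h).symm⟩)
    · left
      refine ⟨cs.old_parts i hi X hX h, ?_⟩
      intro P hP hXP
      obtain ⟨v, hv⟩ := part_nonempty cs (by omega : i + 1 ≤ b) hX
      have : X = P := part_eq cs hi hX (cs.con_sub i hi hP) hv (hXP hv)
      exact h (this ▸ hP)

lemma R_refines {i : ℕ} (hi : i < b) (k : ℕ) :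
    ∀ X ∈ R cs i k, ∃ Y ∈ R cs i (k + 1), X ⊆ Y := by
  classical
  rintro X (⟨hXp, hXn⟩ | ⟨P, hP, rfl⟩ | ⟨hXp, P, hP, hXP, hXl⟩)
  · exact ⟨X, Or.inl ⟨hXp, hXn⟩, subset_rfl⟩
  · exact ⟨ball cs i P (k + 1), ball_mem_R cs hP (k + 1), ball_mono cs (by omega)⟩
  · by_cases hl : lvl cs i P X ≤ k + 1
    · refine ⟨ball cs i P (k + 1), ball_mem_R cs hP (k + 1), ?_⟩
      intro v hv
      exact ⟨X, ⟨hXp, hXP⟩, hl, hv⟩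
    · exact ⟨X, Or.inr (Or.inr ⟨hXp, P, hP, hXP, by omega⟩), subset_rfl⟩

lemma T_char {i k : ℕ} (hi : i < b) {P : Set V} (hP : P ∈ cs.con (i + 1)) {X : Set V}
    (hX : X ∈ R cs i k) (hsub : X ⊆ ball cs i P (k + 1)) :
    X = ball cs i P k ∨ (X ∈ cs.Ps i ∧ X ⊆ P ∧ lvl cs i P X = k + 1) := by
  rcases hX with ⟨hXp, hXn⟩ | ⟨P', hP', rfl⟩ | ⟨hXp, P', hP', hXP', hXl⟩
  · obtain ⟨v, hv⟩ := part_nonempty cs hi.le hXp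
    exact absurd (ball_subset cs (hsub hv)) (not_sub_disjoint cs hi hP hXp (hXn P hP) hv)
  · obtain ⟨v, hv⟩ := ball_nonempty cs hi hP' k
    have : P = P' := part_eq cs hi (cs.con_sub i hi hP) (cs.con_sub i hi hP')
      (ball_subset cs (hsub hv)) (ball_subset cs hv)
    rw [this]
    exact Or.inl rfl
  · obtain ⟨v, hv⟩ := part_nonempty cs hi.le hXp
    obtain ⟨hsubP, hle⟩ := sub_of_mem_ball cs hi hXp hv (hsub hv)
    have : P = P' := part_eq cs hi (cs.con_sub i hi hP) (cs.con_sub i hi hP')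
      (hsubP hv) (hXP' hv)
    subst this
    exact Or.inr ⟨hXp, hsubP, by omega⟩

lemma star {i k : ℕ} (hi : i < b) {P : Set V} (hP : P ∈ cs.con (i + 1)) {D : Set V}
    (hD : D ∈ cs.Ps i) (hDP : D ⊆ P) (hlvl : lvl cs i P D = k + 1) :
    (∀ v ∈ D, v ∉ ball cs i P k) ∧ ∃ u ∈ ball cs i P k, ∃ w ∈ D, G.Adj u w := by
  constructor
  · intro v hv hvb
    have := (sub_of_mem_ball cs hi hD hv hvb).2
    omega
  · obtain ⟨-, -, -, -, -, hstep⟩ := lvl_good cs hi hP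
    obtain ⟨D', hD'S, hlt, u, hu, w, hw, huw⟩ := hstep D ⟨hD, hDP⟩ (by omega)
    exact ⟨w, ⟨D', hD'S, by omega, hw⟩, u, hu, huw.symm⟩

end Construction

theorem statement_11 {V : Type} [Fintype V] (G : SimpleGraph V) (hG : G.Connected)
    (a b c : ℕ) (ha : 1 ≤ a) (hb : 1 ≤ b) (hc : 1 ≤ c)
    (cs : ContractionSeq G a b c) :
    Nonempty (ContractionSeq G (a * c) (b * c) 1) := by
  classical
  have hc0 : 0 < c := hc
  have hdivlt : ∀ j, j < b * c → j / c < b := fun j hj =>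
    (Nat.div_lt_iff_lt_mul hc0).mpr hj
  have hdiv1 : ∀ q r : ℕ, r < c → (c * q + r) / c = q := by
    intro q r hr
    rw [Nat.mul_add_div hc0, Nat.div_eq_of_lt hr]
    omega
  have hmod1 : ∀ q r : ℕ, r < c → (c * q + r) % c = r := by
    intro q r hr
    rw [Nat.mul_add_mod, Nat.mod_eq_of_lt hr]
  have hbc : b * c / c = b := by
    have := hdiv1 b 0 hc0
    simpa [Nat.mul_comm] using this
  set Ps' : ℕ → Set (Set V) :=
    fun j => if c ∣ j then cs.Ps (j / c) else R cs (j / c) (j % c) with hPs'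
  set con' : ℕ → Set (Set V) := fun j =>
    (fun P => ball cs ((j - 1) / c) P ((j - 1) % c + 1)) '' cs.con ((j - 1) / c + 1)
    with hcon'
  have hPs'_eq : ∀ j < b * c, Ps' j = R cs (j / c) (j % c) := by
    intro j hj
    by_cases h : c ∣ j
    · have h0 : j % c = 0 := Nat.mod_eq_zero_of_dvd h
      simp only [hPs']
      rw [if_pos h, h0, R_zero cs (hdivlt j hj)]
    · simp only [hPs']
      rw [if_neg h]
  have hPs'_succ : ∀ j < b * c, Ps' (j + 1) = R cs (j / c) (j % c + 1) := by
    intro j hj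
    have hr : j % c < c := Nat.mod_lt _ hc0
    have hdm := Nat.div_add_mod j c
    rcases Nat.lt_or_ge (j % c + 1) c with hlt | hge
    · have hj1 : j + 1 = c * (j / c) + (j % c + 1) := by omega
      have hd : (j + 1) / c = j / c := by rw [hj1, hdiv1 _ _ hlt]
      have hm : (j + 1) % c = j % c + 1 := by rw [hj1, hmod1 _ _ hlt]
      have hnd : ¬ c ∣ (j + 1) := by
        intro h
        have := Nat.mod_eq_zero_of_dvd h
        omega
      simp only [hPs']
      rw [if_neg hnd, hd, hm]
    · have hrc : j % c + 1 = c := by omega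
      have hj1 : j + 1 = c * (j / c + 1) := by rw [Nat.mul_succ]; omega
      have hd : (j + 1) / c = j / c + 1 := by
        rw [hj1]
        have := hdiv1 (j / c + 1) 0 hc0
        simpa using this
      have hnd : c ∣ (j + 1) := ⟨j / c + 1, hj1⟩
      simp only [hPs']
      rw [if_pos hnd, hd, hrc, ← R_c cs (hdivlt j hj)]
  refine ⟨⟨Ps', con', ?_, ?_, ?_, ?_, ?_, ?_, ?_, ?_⟩⟩
  · -- ispart
    intro j hj
    by_cases h : c ∣ j
    · simp only [hPs']
      rw [if_pos h]
      refine cs.ispart _ ?_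
      calc j / c ≤ b * c / c := Nat.div_le_div_right hj
        _ = b := hbc
    · have hj' : j < b * c := lt_of_le_of_ne hj (fun he => h (he ▸ dvd_mul_left c b))
      rw [hPs'_eq j hj']
      exact R_partition cs (hdivlt j hj') _
  · -- bot
    simp only [hPs']
    rw [if_pos (dvd_zero c)]
    simpa [Nat.zero_div] using cs.bot
  · -- top
    simp only [hPs']
    rw [if_pos (dvd_mul_left c b), hbc]
    exact cs.top
  · -- refines
    intro j hj X hX
    rw [hPs'_eq j hj] at hX
    rw [hPs'_succ j hj]
    exact R_refines cs (hdivlt j hj) _ X hX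
  · -- con_sub
    intro j hj X hX
    simp only [hcon', Nat.add_sub_cancel] at hX
    obtain ⟨P, hP, rfl⟩ := hX
    rw [hPs'_succ j hj]
    exact ball_mem_R cs hP _
  · -- old_parts
    intro j hj X hX hXn
    rw [hPs'_succ j hj] at hX
    rw [hPs'_eq j hj]
    rcases hX with h1 | ⟨P, hP, rfl⟩ | ⟨hXp, P, hP, hXP, hXl⟩
    · exact Or.inl h1
    · exact absurd (by simp only [hcon', Nat.add_sub_cancel]; exact ⟨P, hP, rfl⟩) hXn
    · exact Or.inr (Or.inr ⟨hXp, P, hP, hXP, by omega⟩)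
  · -- contracted
    intro j hj X hX
    simp only [hcon', Nat.add_sub_cancel] at hX
    obtain ⟨P, hP, rfl⟩ := hX
    have hib : j / c < b := hdivlt j hj
    have hctr : ball cs (j / c) P (j % c) ∈
        ({D | D ∈ Ps' j ∧ D ⊆ ball cs (j / c) P (j % c + 1)} : Set (Set V)) := by
      refine ⟨?_, ball_mono cs (by omega)⟩
      rw [hPs'_eq j hj]
      exact ball_mem_R cs hP _
    refine ⟨ball cs (j / c) P (j % c), hctr, ?_⟩
    intro D hD
    have hD1 : D ∈ R cs (j / c) (j % c) := by
      rw [← hPs'_eq j hj]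
      exact hD.1
    rcases T_char cs hib hP hD1 hD.2 with heq | ⟨hDp, hDP, hlvl⟩
    · have e : (⟨D, hD⟩ : {D // D ∈ ({D | D ∈ Ps' j ∧
          D ⊆ ball cs (j / c) P (j % c + 1)} : Set (Set V))}) =
          ⟨ball cs (j / c) P (j % c), hctr⟩ := Subtype.ext heq
      rw [e]
      exact ⟨SimpleGraph.Walk.nil, by simp⟩
    · obtain ⟨hdisj, u, hu, w, hw, huw⟩ := star cs hib hP hDp hDP hlvl
      have hne : (⟨ball cs (j / c) P (j % c), hctr⟩ : {D // D ∈ ({D | D ∈ Ps' j ∧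
          D ⊆ ball cs (j / c) P (j % c + 1)} : Set (Set V))}) ≠ ⟨D, hD⟩ := by
        intro h
        obtain ⟨v, hv⟩ := part_nonempty cs hib.le hDp
        have hbd : ball cs (j / c) P (j % c) = D := congrArg Subtype.val h
        exact hdisj v hv (by rw [hbd]; exact hv)
      exact ⟨SimpleGraph.Walk.cons ⟨hne, u, hu, w, hw, huw⟩ SimpleGraph.Walk.nil,
        le_of_eq rfl⟩
  · -- count
    have key : ∀ m : ℕ, ∑ j ∈ Finset.range (m * c), (cs.con (j / c + 1)).ncard
        = ∑ i ∈ Finset.range m, c * (cs.con (i + 1)).ncard := by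
      intro m
      induction m with
      | zero => simp
      | succ m ih =>
        rw [Nat.succ_mul, Finset.sum_range_add, ih, Finset.sum_range_succ]
        congr 1
        have : ∀ k ∈ Finset.range c,
            (cs.con ((m * c + k) / c + 1)).ncard = (cs.con (m + 1)).ncard := by
          intro k hk
          rw [Finset.mem_range] at hk
          rw [show m * c + k = c * m + k by ring, hdiv1 m k hk]
        rw [Finset.sum_congr rfl this, Finset.sum_const, Finset.card_range,
          smul_eq_mul]
    calc ∑ j ∈ Finset.range (b * c), (con' (j + 1)).ncard
        ≤ ∑ j ∈ Finset.range (b * c), (cs.con (j / c + 1)).ncard := by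
          refine Finset.sum_le_sum fun j _ => ?_
          simp only [hcon', Nat.add_sub_cancel]
          exact Set.ncard_image_le (Set.toFinite _)
      _ = ∑ i ∈ Finset.range b, c * (cs.con (i + 1)).ncard := key b
      _ = c * ∑ i ∈ Finset.range b, (cs.con (i + 1)).ncard := (Finset.mul_sum _ _ _).symm
      _ ≤ c * a := Nat.mul_le_mul_left c cs.count
      _ = a * c := Nat.mul_comm c a

end Paper
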